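/- arXiv:2006.12207 — 2 statements merged into one kernel-verified Lean document; each statement's English description precedes it below -/
import Mathlib

section
/- Let A be a finite alphabet, φ: A* → A* a morphism in Class P_ret with marker w, and u ∈ A^ℕ an infinite word. If v is a finite factor of φ(u) having w both as a prefix and as a suffix, then there exists a unique finite word x ∈ A* such that v = φ(x)w; moreover this word x is a factor of u. -/
open List

/-- Apply a morphism (given by its values on letters) to a finite word. -/
def applyM {A : Type*} (φ : A → List A) (v : List A) : List A := v.flatMap φ

/-- The set of occurrences of `w` as a factor of `u`:
indices `i` such that the block of `u` of length `|w|` starting at `i` equals `w`. -/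
def occs {A : Type*} [DecidableEq A] (w u : List A) : Finset ℕ :=
  (Finset.range (u.length + 1)).filter
    (fun i => i + w.length ≤ u.length ∧ (u.drop i).take w.length = w)

/-- A morphism `φ` belongs to Class `P_ret` with marker `w` if it is injective on
letters, `w` is a palindrome, and for each letter `a` the word `φ(a)w` is a palindrome
in which `w` occurs exactly twice, namely as a prefix (position `0`) and as a suffix
(position `|φ(a)|`, distinct from `0`). -/
def IsPretWithMarker {A : Type*} [DecidableEq A] (φ : A → List A) (w : List A) : Prop :=
  Function.Injective φ ∧ w.reverse = w ∧
    ∀ a : A, (φ a ++ w).reverse = φ a ++ w ∧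
      occs w (φ a ++ w) = {0, (φ a).length} ∧ (φ a).length ≠ 0

/-- The block of length `len` of the infinite word `u` starting at position `i`. -/
def factorAt {A : Type*} (u : ℕ → A) (i len : ℕ) : List A :=
  (List.range len).map fun k => u (i + k)

/-- `i` is an occurrence of the finite word `v` in the infinite word `u`. -/
def OccursAt {A : Type*} (u : ℕ → A) (v : List A) (i : ℕ) : Prop :=
  factorAt u i v.length = v

/-- `v` belongs to the language of the infinite word `u`, i.e. `v` is a factor of `u`. -/
def InLang {A : Type*} (u : ℕ → A) (v : List A) : Prop := ∃ i, OccursAt u v i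

/-- The image `φ(u) = φ(u₀)φ(u₁)φ(u₂)⋯` of an infinite word `u` under a
(non-erasing) morphism `φ`, as an infinite word. -/
def applyInf {A : Type*} (φ : A → List A) (u : ℕ → A) (n : ℕ) : A :=
  (((List.range (n + 1)).flatMap fun i => φ (u i))).getD n (u 0)

/-- The language of `u` is closed under reversal. -/
def ClosedUnderReversal {A : Type*} (u : ℕ → A) : Prop :=
  ∀ v : List A, InLang u v → InLang u v.reverse

/-- A finite word is rich if its number of palindromic factors (including `ε`)
equals its length plus one. -/
def RichWord {A : Type*} (u : List A) : Prop :=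
  {p : List A | p <:+: u ∧ p.reverse = p}.ncard = u.length + 1

/-- An infinite word is rich if all its finite prefixes are rich. -/
def RichInf {A : Type*} (u : ℕ → A) : Prop := ∀ n : ℕ, RichWord (factorAt u 0 n)

/-- An infinite word is recurrent if each of its factors occurs infinitely often. -/
def Recurrent {A : Type*} (u : ℕ → A) : Prop :=
  ∀ v : List A, InLang u v → ∀ N : ℕ, ∃ i, N ≤ i ∧ OccursAt u v i

/-- `r` is a return word to `w` in the infinite word `u`: `wr ∈ L(u)` and `w`
occurs in `wr` exactly twice, as a prefix and as a suffix. -/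
def IsReturnWord {A : Type*} [DecidableEq A] (u : ℕ → A) (w r : List A) : Prop :=
  r ≠ [] ∧ InLang u (w ++ r) ∧ occs w (w ++ r) = {0, r.length}

/-- Left extensions of `x` in the language of `u`. -/
def leftExt {A : Type*} (u : ℕ → A) (x : List A) : Set A := {a | InLang u (a :: x)}

/-- Right extensions of `x` in the language of `u`. -/
def rightExt {A : Type*} (u : ℕ → A) (x : List A) : Set A := {b | InLang u (x ++ [b])}

/-- Bi-extensions of `x` in the language of `u`. -/
def biExt {A : Type*} (u : ℕ → A) (x : List A) : Set (A × A) :=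
  {p | InLang u (p.1 :: (x ++ [p.2]))}

/-- `x` is bispecial in `u`. -/
def Bispecial {A : Type*} (u : ℕ → A) (x : List A) : Prop :=
  2 ≤ (leftExt u x).ncard ∧ 2 ≤ (rightExt u x).ncard

/-- The bilateral order `b_u(x) = #B_u(x) − #L_u(x) − #R_u(x) + 1`. -/
noncomputable def bilateralOrder {A : Type*} (u : ℕ → A) (x : List A) : ℤ :=
  ((biExt u x).ncard : ℤ) - (leftExt u x).ncard - (rightExt u x).ncard + 1

/-- The number of palindromic extensions of `x` in `u`. -/
noncomputable def pext {A : Type*} (u : ℕ → A) (x : List A) : ℕ :=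
  {a | InLang u (a :: (x ++ [a]))}.ncard

/-- Arnoux-Rauzy morphisms: the monoid of morphisms generated by permutations of the
alphabet and by the elementary morphisms `ψ_a : a ↦ a, b ↦ ab` and `ψ̄_a : a ↦ a, b ↦ ba`. -/
inductive IsAR {A : Type*} [DecidableEq A] : (A → List A) → Prop
  | perm (π : Equiv.Perm A) : IsAR (fun a => [π a])
  | psiL (a : A) : IsAR (fun b => if b = a then [a] else [a, b])
  | psiR (a : A) : IsAR (fun b => if b = a then [a] else [b, a])
  | comp {φ ψ : A → List A} : IsAR φ → IsAR ψ → IsAR (fun a => applyM φ (ψ a))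

/-- The `k`-th power `φ^k` of a morphism. -/
def powM {A : Type*} (φ : A → List A) : ℕ → A → List A
  | 0, a => [a]
  | n + 1, a => applyM (powM φ n) (φ a)

/-- A morphism is primitive if some power of it maps every letter to a word
containing every letter. -/
def PrimitiveM {A : Type*} (φ : A → List A) : Prop :=
  ∃ k : ℕ, ∀ a b : A, b ∈ powM φ k a

/-- A (acyclic) morphism is marked: it has a rightmost conjugate `φR` whose
last-letter map is injective, and a leftmost conjugate `φL` whose first-letter map
is injective. -/
def Marked {A : Type*} (φ : A → List A) : Prop :=
  ∃ (φR φL : A → List A) (x y : List A),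
    (∀ a, φ a ++ x = x ++ φR a) ∧
    (∀ a, φL a ++ y = y ++ φ a) ∧
    (∃ a b : A, (φR a).getLast? ≠ (φR b).getLast?) ∧
    (∃ a b : A, (φL a).head? ≠ (φL b).head?) ∧
    Function.Injective (fun c => (φR c).getLast?) ∧
    Function.Injective (fun c => (φL c).head?)

section Help
variable {A : Type*} [DecidableEq A] {φ : A → List A} {w : List A}

lemma applyM_nil (φ : A → List A) : applyM φ [] = [] := rfl

lemma applyM_cons (φ : A → List A) (a : A) (x : List A) :
    applyM φ (a :: x) = φ a ++ applyM φ x := by simp [applyM]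

lemma applyM_append (φ : A → List A) (x y : List A) :
    applyM φ (x ++ y) = applyM φ x ++ applyM φ y := by simp [applyM]

lemma mem_occs {w u : List A} {q : ℕ} :
    q ∈ occs w u ↔ q + w.length ≤ u.length ∧ (u.drop q).take w.length = w := by
  unfold occs
  simp only [Finset.mem_filter, Finset.mem_range, Nat.lt_succ_iff]
  constructor
  · rintro ⟨_, h2, h3⟩; exact ⟨h2, h3⟩
  · rintro ⟨h2, h3⟩; exact ⟨by omega, h2, h3⟩

lemma length_le_applyM (hne : ∀ a : A, φ a ≠ []) (s : List A) :
    s.length ≤ (applyM φ s).length := by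
  induction s with
  | nil => simp [applyM]
  | cons a s ih =>
    rw [applyM_cons]
    have := List.length_pos_iff.mpr (hne a)
    simp only [length_cons, length_append]
    omega

lemma wpref (hwp : ∀ a : A, w <+: φ a ++ w) : ∀ x : List A, w <+: applyM φ x ++ w := by
  intro x
  induction x with
  | nil => simp [applyM]
  | cons a x ih =>
    obtain ⟨t, ht⟩ := ih
    have he : applyM φ (a :: x) ++ w = (φ a ++ w) ++ t := by
      rw [applyM_cons, append_assoc, ← ht, ← append_assoc]
    rw [he]
    exact (hwp a).trans (prefix_append _ _)

lemma sync (hne : ∀ a : A, φ a ≠ []) (hwp : ∀ a : A, w <+: φ a ++ w)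
    (hocc : ∀ (a : A) (q : ℕ), q + w.length ≤ (φ a).length + w.length →
      ((φ a ++ w).drop q).take w.length = w → q = 0 ∨ q = (φ a).length) :
    ∀ (x : List A) (q : ℕ), q + w.length ≤ (applyM φ x).length + w.length →
      ((applyM φ x ++ w).drop q).take w.length = w →
      ∃ p, p <+: x ∧ q = (applyM φ p).length := by
  intro x
  induction x with
  | nil =>
    intro q hq _
    refine ⟨[], nil_prefix, ?_⟩
    simp only [applyM_nil, length_nil]
    simp [applyM] at hq
    omega
  | cons a x ih =>
    intro q hq hblock
    rcases Nat.lt_or_ge q (φ a).length with hlt | hge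
    · -- block lies within φ a ++ w
      obtain ⟨t, ht⟩ := wpref hwp x
      have he : applyM φ (a :: x) ++ w = (φ a ++ w) ++ t := by
        rw [applyM_cons, append_assoc, ← ht, ← append_assoc]
      rw [he, drop_append] at hblock
      have h0 : q - (φ a ++ w).length = 0 := by
        simp only [length_append]; omega
      rw [h0, drop_zero, take_append_of_le_length (by
        simp only [length_drop, length_append]; omega)] at hblock
      have := hocc a q (by omega) hblock
      refine ⟨[], nil_prefix, ?_⟩
      simp only [applyM_nil, length_nil]
      omega
    · have he : applyM φ (a :: x) ++ w = φ a ++ (applyM φ x ++ w) := by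
        rw [applyM_cons, append_assoc]
      rw [he, drop_append, drop_eq_nil_of_le hge, nil_append] at hblock
      have hq' : (q - (φ a).length) + w.length ≤ (applyM φ x).length + w.length := by
        rw [applyM_cons, length_append] at hq; omega
      obtain ⟨p, hp, hpl⟩ := ih (q - (φ a).length) hq' hblock
      refine ⟨a :: p, cons_prefix_cons.mpr ⟨rfl, hp⟩, ?_⟩
      rw [applyM_cons, length_append]
      omega
end Help

section Help2
variable {A : Type*} [DecidableEq A] {φ : A → List A}

lemma length_factorAt (u : ℕ → A) (i len : ℕ) : (factorAt u i len).length = len := by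
  simp [factorAt]

lemma getElem_factorAt (u : ℕ → A) (i len n : ℕ) (h : n < (factorAt u i len).length) :
    (factorAt u i len)[n] = u (i + n) := by
  simp [factorAt]

lemma applyM_factorAt (φ : A → List A) (u : ℕ → A) (M : ℕ) :
    applyM φ (factorAt u 0 M) = (List.range M).flatMap fun i => φ (u i) := by
  unfold applyM factorAt
  rw [flatMap_map]
  simp

lemma le_length_applyM_factorAt (hne : ∀ a : A, φ a ≠ []) (u : ℕ → A) (M : ℕ) :
    M ≤ (applyM φ (factorAt u 0 M)).length := by
  have := length_le_applyM hne (factorAt u 0 M)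
  rwa [length_factorAt] at this

lemma applyInf_eq_getD (hne : ∀ a : A, φ a ≠ []) (u : ℕ → A) {n N : ℕ} (hn : n < N) :
    applyInf φ u n = (applyM φ (factorAt u 0 N)).getD n (u 0) := by
  rw [applyM_factorAt]
  obtain ⟨k, rfl⟩ : ∃ k, N = (n + 1) + k := ⟨N - (n + 1), by omega⟩
  have h1 : n < ((List.range (n + 1)).flatMap fun i => φ (u i)).length := by
    have := le_length_applyM_factorAt hne u (n + 1)
    rw [applyM_factorAt] at this
    omega
  rw [range_add, flatMap_append, getD_append _ _ _ _ h1]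
  rfl

lemma factorAt_applyInf (hne : ∀ a : A, φ a ≠ []) (u : ℕ → A) (i m : ℕ) :
    factorAt (applyInf φ u) i m =
      ((applyM φ (factorAt u 0 (i + m))).drop i).take m := by
  have hlen := le_length_applyM_factorAt hne u (i + m)
  apply List.ext_getElem
  · rw [length_factorAt]
    simp only [length_take, length_drop]
    omega
  · intro n h1 h2
    rw [length_factorAt] at h1
    rw [getElem_factorAt, getElem_take, getElem_drop]
    rw [applyInf_eq_getD hne u (show i + n < i + m by omega),
      getD_eq_getElem _ _ (by omega)]

lemma factorAt_shift (u : ℕ → A) (a m N : ℕ) (h : a + m ≤ N) :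
    ((factorAt u 0 N).drop a).take m = factorAt u a m := by
  apply List.ext_getElem
  · rw [length_factorAt]
    simp only [length_take, length_drop, length_factorAt]
    omega
  · intro n h1 h2
    rw [getElem_take, getElem_drop, getElem_factorAt, getElem_factorAt]
    congr 1
    omega
end Help2

/-- If `v` is a factor of `φ(u)` having the marker `w` both as a prefix
and as a suffix, then there is a unique `x` with `v = φ(x)w`; moreover `x` is a factor
of `u`. -/
theorem pret_desubstitution {A : Type*} [Fintype A] [DecidableEq A]
    (φ : A → List A) (w : List A) (h : IsPretWithMarker φ w) (u : ℕ → A)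
    (v : List A) (hv : InLang (applyInf φ u) v) (hpre : w <+: v) (hsuf : w <:+ v) :
    (∃ x : List A, v = applyM φ x ++ w ∧ InLang u x) ∧
    (∀ x y : List A, v = applyM φ x ++ w → v = applyM φ y ++ w → x = y) := by
  obtain ⟨hinj, hwpal, hP⟩ := h
  have hne : ∀ a : A, φ a ≠ [] := by
    intro a he
    exact (hP a).2.2 (by rw [he]; rfl)
  have hwp : ∀ a : A, w <+: φ a ++ w := by
    intro a
    have h0 : (0 : ℕ) ∈ occs w (φ a ++ w) := by
      rw [(hP a).2.1]; simp
    rw [mem_occs] at h0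
    rw [prefix_iff_eq_take]
    simpa using h0.2.symm
  have hocc : ∀ (a : A) (q : ℕ), q + w.length ≤ (φ a).length + w.length →
      ((φ a ++ w).drop q).take w.length = w → q = 0 ∨ q = (φ a).length := by
    intro a q h1 h2
    have hm : q ∈ occs w (φ a ++ w) := mem_occs.mpr ⟨by simpa using h1, h2⟩
    rw [(hP a).2.1] at hm
    simpa using hm
  have hsync := sync hne hwp hocc
  -- injectivity of applyM
  have hge : ∀ (a b : A) (x y : List A), φ a ++ applyM φ x = φ b ++ applyM φ y →
      (φ b).length ≤ (φ a).length := by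
    intro a b x y e
    have hlen : (φ a).length + (applyM φ x).length
        = (φ b).length + (applyM φ y).length := by
      have := congrArg List.length e
      simpa using this
    have hblock : ((applyM φ (b :: y) ++ w).drop (φ a).length).take w.length = w := by
      have he2 : applyM φ (b :: y) ++ w = φ a ++ (applyM φ x ++ w) := by
        rw [applyM_cons, ← e, append_assoc]
      rw [he2, drop_append, drop_eq_nil_of_le le_rfl, nil_append,
        Nat.sub_self, drop_zero]
      exact ((prefix_iff_eq_take).mp (wpref hwp x)).symm
    have hb : (φ a).length + w.length ≤ (applyM φ (b :: y)).length + w.length := by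
      rw [applyM_cons, length_append]
      omega
    obtain ⟨p, hp, hpl⟩ := hsync (b :: y) (φ a).length hb hblock
    cases p with
    | nil =>
      exfalso
      have := List.length_pos_iff.mpr (hne a)
      simp only [applyM_nil, length_nil] at hpl
      omega
    | cons c p' =>
      have hc : c = b := (cons_prefix_cons.mp hp).1
      rw [applyM_cons, length_append, hc] at hpl
      omega
  have hinjM : ∀ x y : List A, applyM φ x = applyM φ y → x = y := by
    intro x
    induction x with
    | nil =>
      intro y e
      cases y with
      | nil => rfl
      | cons b y =>
        exfalso
        rw [applyM_cons] at e
        have := congrArg List.length e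
        have hb := List.length_pos_iff.mpr (hne b)
        simp only [applyM_nil, length_nil, length_append] at this
        omega
    | cons a x ih =>
      intro y e
      cases y with
      | nil =>
        exfalso
        rw [applyM_cons] at e
        have := congrArg List.length e
        have ha := List.length_pos_iff.mpr (hne a)
        simp only [applyM_nil, length_nil, length_append] at this
        omega
      | cons b y =>
        rw [applyM_cons, applyM_cons] at e
        have h1 := hge a b x y e
        have h2 := hge b a y x e.symm
        have hlen : (φ a).length = (φ b).length := le_antisymm h2 h1
        obtain ⟨hab, hxy⟩ := List.append_inj e hlen
        rw [ih y hxy, hinj hab]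
  constructor
  · -- existence
    obtain ⟨i, hi⟩ := hv
    set N := i + v.length with hN
    set s := factorAt u 0 N with hs
    set W := applyM φ s with hWdef
    have hWlen : N ≤ W.length := le_length_applyM_factorAt hne u N
    have hslen : s.length = N := length_factorAt u 0 N
    have hwv : w.length ≤ v.length := hpre.length_le
    have hvW : v = (W.drop i).take v.length := by
      rw [← factorAt_applyInf hne u i v.length]
      exact hi.symm
    -- occurrence of w at position i in W ++ w
    have occ1 : ((W ++ w).drop i).take w.length = w := by
      rw [drop_append,
        take_append_of_le_length (by simp only [length_drop]; omega)]
      have key : (W.drop i).take w.length = v.take w.length := by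
        conv_rhs => rw [hvW]
        rw [take_take, min_eq_left hwv]
      rw [key]
      exact (prefix_iff_eq_take.mp hpre).symm
    have occ2 : ((W ++ w).drop (i + (v.length - w.length))).take w.length = w := by
      rw [drop_append,
        take_append_of_le_length (by simp only [length_drop]; omega)]
      have e1 : w = ((W.drop i).drop (v.length - w.length)).take w.length := by
        calc w = v.drop (v.length - w.length) := suffix_iff_eq_drop.mp hsuf
        _ = ((W.drop i).take v.length).drop (v.length - w.length) := by rw [← hvW]
        _ = ((W.drop i).drop (v.length - w.length)).take (v.length - (v.length - w.length)) :=
            drop_take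
        _ = ((W.drop i).drop (v.length - w.length)).take w.length := by congr 1; omega
      rw [← drop_drop]
      exact e1.symm
    obtain ⟨p1, hp1, hi1⟩ := hsync s i (by rw [← hWdef]; omega) occ1
    obtain ⟨p2, hp2, hi2⟩ := hsync s (i + (v.length - w.length)) (by rw [← hWdef]; omega) occ2
    have h12 : p1 <+: p2 := by
      rcases prefix_or_prefix_of_prefix hp1 hp2 with h' | h'
      · exact h'
      · obtain ⟨t, rfl⟩ := h'
        rw [applyM_append, length_append] at hi1
        have htl := length_le_applyM hne t
        have ht0 : t.length = 0 := by omega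
        rw [List.length_eq_zero_iff.mp ht0, append_nil]
    obtain ⟨x, rfl⟩ := h12
    have hxlen : (applyM φ x).length = v.length - w.length := by
      rw [applyM_append, length_append] at hi2
      omega
    obtain ⟨r, hr⟩ := hp2
    have hrlen : p1.length + (x.length + r.length) = N := by
      have := congrArg List.length hr
      simp only [length_append, append_assoc] at this
      omega
    have hWsplit : W = applyM φ p1 ++ (applyM φ x ++ applyM φ r) := by
      rw [hWdef, ← hr, append_assoc, applyM_append, applyM_append]
    have hdropi : W.drop i = applyM φ x ++ applyM φ r := by
      rw [hWsplit, hi1, drop_left]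
    have hv1 : v.take (v.length - w.length) = applyM φ x := by
      calc v.take (v.length - w.length)
          = ((W.drop i).take v.length).take (v.length - w.length) := by rw [← hvW]
        _ = (W.drop i).take (min (v.length - w.length) v.length) := take_take
        _ = (W.drop i).take (v.length - w.length) := by rw [min_eq_left (by omega)]
        _ = applyM φ x := by rw [hdropi, ← hxlen, take_left]
    have hw2 : v.drop (v.length - w.length) = w := (suffix_iff_eq_drop.mp hsuf).symm
    refine ⟨x, ?_, p1.length, ?_⟩
    · rw [← hw2, ← hv1, take_append_drop]
    · show factorAt u p1.length x.length = x
      rw [← factorAt_shift u p1.length x.length N (by omega), ← hs]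
      have hdrops : s.drop p1.length = x ++ r := by
        rw [← hr, append_assoc, drop_left]
      rw [hdrops, take_left]
  · intro x y hx hy
    rw [hx] at hy
    exact hinjM x y (List.append_cancel_right hy)
end

section
/- Let A be a finite alphabet, u ∈ A^ℕ an infinite word, and φ: A* → A* a morphism in Class P_ret with marker w such that the last letters of the words φ(c), c ∈ A, are not all equal and the map sending each letter c to the last letter of φ(c) is injective. Let a, b ∈ A with b equal to the last letter of φ(a). Then: (1) for every occurrence i of the word wb in φ(u), the block of φ(u) of length |φ(a)w| starting at position i equals φ(a)w; and (2) for every occurrence i of the word bw in φ(u), one has i + 1 + |w| ≥ |φ(a)w| and the block of φ(u) of length |φ(a)w| starting at position i + 1 + |w| − |φ(a)w| equals φ(a)w. -/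
open List

set_option linter.unusedSectionVars false

namespace PretAux

variable {A : Type*} [DecidableEq A]

/-- Concatenation of images of the letters `u s, …, u (s+n-1)`. -/
def Sg (φ : A → List A) (u : ℕ → A) (s n : ℕ) : List A :=
  (List.range' s n).flatMap fun i => φ (u i)

lemma Sg_add (φ : A → List A) (u : ℕ → A) (s n m : ℕ) :
    Sg φ u s (n + m) = Sg φ u s n ++ Sg φ u (s + n) m := by
  unfold Sg
  rw [← List.flatMap_append]
  congr 1
  rw [← List.range'_append (s := s) (m := n) (n := m) (step := 1), one_mul]

lemma Sg_one (φ : A → List A) (u : ℕ → A) (s : ℕ) : Sg φ u s 1 = φ (u s) := by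
  simp [Sg]

lemma Sg_succ (φ : A → List A) (u : ℕ → A) (s n : ℕ) :
    Sg φ u s (n + 1) = Sg φ u s n ++ φ (u (s + n)) := by
  rw [Sg_add, Sg_one]

lemma le_length_Sg (φ : A → List A) (u : ℕ → A) (hne : ∀ c, φ c ≠ []) (s n : ℕ) :
    n ≤ (Sg φ u s n).length := by
  induction n with
  | zero => simp [Sg]
  | succ n ih =>
    rw [Sg_succ, List.length_append]
    have : 0 < (φ (u (s + n))).length := List.length_pos_iff.mpr (hne _)
    omega

lemma prefix_Sg (φ : A → List A) (u : ℕ → A) (w : List A)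
    (hpre : ∀ c, w <+: φ c ++ w) (s n : ℕ) : w <+: Sg φ u s n ++ w := by
  induction n generalizing s with
  | zero => simpa [Sg] using List.prefix_refl w
  | succ n ih =>
    rw [show n + 1 = 1 + n from Nat.add_comm n 1, Sg_add, Sg_one]
    obtain ⟨t, ht⟩ := ih (s + 1)
    refine (hpre (u s)).trans ?_
    rw [List.append_assoc, ← ht, ← List.append_assoc]
    exact List.prefix_append _ _

lemma take_Sg (φ : A → List A) (u : ℕ → A) (w : List A)
    (hpre : ∀ c, w <+: φ c ++ w) (s n : ℕ) (h : w.length ≤ (Sg φ u s n).length) :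
    (Sg φ u s n).take w.length = w := by
  have h1 := (List.prefix_iff_eq_take.mp (prefix_Sg φ u w hpre s n))
  rw [List.take_append_of_le_length h] at h1
  exact h1.symm

lemma Sg_prefix (φ : A → List A) (u : ℕ → A) {m m' : ℕ} (h : m ≤ m') :
    Sg φ u 0 m <+: Sg φ u 0 m' :=
  ⟨Sg φ u (0 + m) (m' - m), by rw [← Sg_add]; congr 1; omega⟩

lemma applyInf_getElem (φ : A → List A) (u : ℕ → A) (hne : ∀ c, φ c ≠ [])
    (n m : ℕ) (hn : n < (Sg φ u 0 m).length) :
    applyInf φ u n = (Sg φ u 0 m)[n] := by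
  have hS : (List.range (n + 1)).flatMap (fun i => φ (u i)) = Sg φ u 0 (n + 1) := by
    simp [Sg, List.range_eq_range']
  have hlen : n < (Sg φ u 0 (n + 1)).length :=
    lt_of_lt_of_le (Nat.lt_succ_self n) (le_length_Sg φ u hne 0 (n + 1))
  rw [applyInf, hS, List.getD_eq_getElem _ _ hlen]
  rcases le_total (n + 1) m with hm | hm
  · exact (Sg_prefix φ u hm).getElem hlen
  · exact ((Sg_prefix φ u hm).getElem hn).symm

lemma length_factorAt (U : ℕ → A) (i len : ℕ) : (factorAt U i len).length = len := by
  simp [factorAt]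

lemma factorAt_getElem? (U : ℕ → A) (i len k : ℕ) (hk : k < len) :
    (factorAt U i len)[k]? = some (U (i + k)) := by
  simp [factorAt, hk]

lemma factorAt_eq_take_drop (φ : A → List A) (u : ℕ → A) (hne : ∀ c, φ c ≠ [])
    (i len m : ℕ) (hlen : i + len ≤ (Sg φ u 0 m).length) :
    factorAt (applyInf φ u) i len = ((Sg φ u 0 m).drop i).take len := by
  apply List.ext_getElem
  · simp [factorAt]; omega
  · intro k h1 h2
    simp only [factorAt, List.getElem_map, List.getElem_range, List.getElem_take,
      List.getElem_drop]
    exact applyInf_getElem φ u hne (i + k) m (by simp [factorAt] at h1; omega)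

lemma factorAt_sub (U : ℕ → A) (i d len len' : ℕ) (h : d + len' ≤ len) :
    ((factorAt U i len).drop d).take len' = factorAt U (i + d) len' := by
  apply List.ext_getElem
  · simp [factorAt]; omega
  · intro k h1 h2
    simp only [List.getElem_take, List.getElem_drop, factorAt, List.getElem_map,
      List.getElem_range]
    congr 1
    omega

lemma factorAt_boundary (φ : A → List A) (u : ℕ → A) (w : List A)
    (hne : ∀ c, φ c ≠ []) (hpre : ∀ c, w <+: φ c ++ w) (k : ℕ) :
    factorAt (applyInf φ u) ((Sg φ u 0 k).length) ((φ (u k)).length + w.length)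
      = φ (u k) ++ w := by
  have hdecomp : Sg φ u 0 (k + (1 + w.length))
      = Sg φ u 0 k ++ (φ (u k) ++ Sg φ u (k + 1) w.length) := by
    rw [Sg_add]
    congr 1
    · rw [Nat.zero_add, Sg_add, Sg_one]
  have hlen2 : w.length ≤ (Sg φ u (k + 1) w.length).length := le_length_Sg φ u hne _ _
  have hlen : (Sg φ u 0 k).length + ((φ (u k)).length + w.length)
      ≤ (Sg φ u 0 (k + (1 + w.length))).length := by
    rw [hdecomp]; simp only [List.length_append]; omega
  rw [factorAt_eq_take_drop φ u hne _ _ _ hlen, hdecomp, List.drop_left,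
    List.take_length_add_append, take_Sg φ u w hpre _ _ hlen2]

lemma occ_boundary (φ : A → List A) (u : ℕ → A) (w : List A)
    (hne : ∀ c, φ c ≠ []) (hpre : ∀ c, w <+: φ c ++ w)
    (hocc : ∀ c, occs w (φ c ++ w) = {0, (φ c).length})
    (i : ℕ) (hw : factorAt (applyInf φ u) i w.length = w) :
    ∃ k, i = (Sg φ u 0 k).length := by
  classical
  set p : ℕ → ℕ := fun k => (Sg φ u 0 k).length with hp
  have hp0 : p 0 = 0 := by simp [p, Sg]
  have hpk1 : ∀ k, p (k + 1) = p k + (φ (u k)).length := by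
    intro k
    simp [p, Sg_succ, List.length_append]
  have hpge : ∀ k, k ≤ p k := fun k => le_length_Sg φ u hne 0 k
  set k := Nat.findGreatest (fun k => p k ≤ i) i with hk
  have hki : p k ≤ i :=
    Nat.findGreatest_spec (P := fun k => p k ≤ i) (Nat.zero_le i) (by simp [hp0])
  have hik : i < p (k + 1) := by
    by_contra hcon
    push_neg at hcon
    have hk1 : k + 1 ≤ i := le_trans (hpge (k + 1)) hcon
    exact Nat.findGreatest_is_greatest (Nat.lt_succ_self k) hk1 hcon
  have hF := factorAt_boundary φ u w hne hpre k
  have hφpos : 0 < (φ (u k)).length := List.length_pos_iff.mpr (hne _)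
  have hik' : i < p k + (φ (u k)).length := by rw [← hpk1]; exact hik
  have hjw : ((φ (u k) ++ w).drop (i - p k)).take w.length = w := by
    rw [← hF, factorAt_sub _ _ _ _ _ (by omega),
      show p k + (i - p k) = i from by omega]
    exact hw
  have hj : (i - p k) ∈ occs w (φ (u k) ++ w) := by
    simp only [occs, Finset.mem_filter, Finset.mem_range, List.length_append]
    exact ⟨by omega, by omega, hjw⟩
  rw [hocc (u k)] at hj
  simp only [Finset.mem_insert, Finset.mem_singleton] at hj
  rcases hj with hj | hj
  · refine ⟨k, ?_⟩
    have : i = p k := by omega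
    simpa [hp] using this
  · exfalso; omega

lemma letter_w (φ : A → List A) (w : List A) (ρc : A) (c : A)
    (hpal : (φ c ++ w).reverse = φ c ++ w) (hc : (φ c).length ≠ 0)
    (hρc : (φ c).getLast? = some ρc) :
    (φ c ++ w)[w.length]? = some ρc := by
  have hlt : w.length < (φ c ++ w).length := by
    rw [List.length_append]; omega
  conv_lhs => rw [← hpal]
  rw [List.getElem?_reverse hlt,
    show (φ c ++ w).length - 1 - w.length = (φ c).length - 1 from by
      rw [List.length_append]; omega,
    List.getElem?_append, if_pos (by omega), ← List.getLast?_eq_getElem?]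
  exact hρc

lemma letter_last (φ : A → List A) (w : List A) (ρc : A) (c : A)
    (hc : (φ c).length ≠ 0) (hρc : (φ c).getLast? = some ρc) :
    (φ c ++ w)[(φ c).length - 1]? = some ρc := by
  rw [List.getElem?_append, if_pos (by omega), ← List.getLast?_eq_getElem?]
  exact hρc

end PretAux

/-- Let `φ ∈ P_ret` be marked with marker `w`, equal to its rightmost
conjugate, `ρ` the (injective) last-letter map, and `b = ρ(a)`. Then `wb` occurs in
`φ(u)` only as a prefix of `φ(a)w`, and `bw` occurs in `φ(u)` only as a suffix of
`φ(a)w`. -/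
theorem pret_marked_occurrences {A : Type*} [Fintype A] [DecidableEq A]
    (φ : A → List A) (w : List A) (ρ : A → A) (h : IsPretWithMarker φ w)
    (hρ : ∀ c : A, (φ c).getLast? = some (ρ c))
    (hne : ∃ c d : A, ρ c ≠ ρ d)
    (hinj : Function.Injective ρ)
    (u : ℕ → A) (a b : A) (hb : b = ρ a) :
    (∀ i : ℕ, OccursAt (applyInf φ u) (w ++ [b]) i →
        OccursAt (applyInf φ u) (φ a ++ w) i) ∧
    (∀ i : ℕ, OccursAt (applyInf φ u) (b :: w) i →
        (φ a ++ w).length ≤ i + 1 + w.length ∧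
        OccursAt (applyInf φ u) (φ a ++ w) (i + 1 + w.length - (φ a ++ w).length)) := by
  classical
  obtain ⟨-, hwpal, hP⟩ := h
  have hne' : ∀ c, φ c ≠ [] := fun c hc => (hP c).2.2 (by rw [hc]; rfl)
  have hpre : ∀ c, w <+: φ c ++ w := by
    intro c
    have h0 : (0 : ℕ) ∈ occs w (φ c ++ w) := by rw [(hP c).2.1]; simp
    simp only [occs, Finset.mem_filter, Finset.mem_range, List.drop_zero] at h0
    exact List.prefix_iff_eq_take.mpr h0.2.2.symm
  have hocc : ∀ c, occs w (φ c ++ w) = {0, (φ c).length} := fun c => (hP c).2.1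
  constructor
  · intro i hi
    unfold OccursAt at hi ⊢
    rw [show (w ++ [b]).length = w.length + 1 by simp] at hi
    have hw_occ : factorAt (applyInf φ u) i w.length = w := by
      have hs := PretAux.factorAt_sub (applyInf φ u) i 0 (w.length + 1) w.length (by omega)
      rw [hi, Nat.add_zero] at hs
      rw [← hs, List.drop_zero, List.take_append_of_le_length le_rfl, List.take_length]
    obtain ⟨k, hk⟩ := PretAux.occ_boundary φ u w hne' hpre hocc i hw_occ
    have hF := PretAux.factorAt_boundary φ u w hne' hpre k
    have hφpos : 0 < (φ (u k)).length := List.length_pos_iff.mpr (hne' _)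
    have hb1 : applyInf φ u (i + w.length) = b := by
      have h1 := PretAux.factorAt_getElem? (applyInf φ u) i (w.length + 1) w.length (by omega)
      rw [hi] at h1
      have h2 : (w ++ [b])[w.length]? = some b := by simp
      exact Option.some.inj (h1.symm.trans h2)
    have hb2 : applyInf φ u (i + w.length) = ρ (u k) := by
      have h1 := PretAux.factorAt_getElem? (applyInf φ u) (PretAux.Sg φ u 0 k).length
        ((φ (u k)).length + w.length) w.length (by omega)
      rw [hF, ← hk] at h1
      have h2 := PretAux.letter_w φ w (ρ (u k)) (u k) (hP (u k)).1 (hP (u k)).2.2 (hρ (u k))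
      exact Option.some.inj (h1.symm.trans h2)
    have hua : u k = a := hinj (by rw [← hb2, hb1, hb])
    rw [List.length_append, hk, ← hua]
    exact hF
  · intro i hi
    unfold OccursAt at hi ⊢
    rw [show (b :: w).length = 1 + w.length by rw [List.length_cons, Nat.add_comm]] at hi
    have hw_occ : factorAt (applyInf φ u) (i + 1) w.length = w := by
      have hs := PretAux.factorAt_sub (applyInf φ u) i 1 (1 + w.length) w.length le_rfl
      rw [hi] at hs
      simpa using hs.symm
    obtain ⟨k, hk⟩ := PretAux.occ_boundary φ u w hne' hpre hocc (i + 1) hw_occ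
    have hkpos : k ≠ 0 := by
      rintro rfl
      simp [PretAux.Sg] at hk
    obtain ⟨k', rfl⟩ := Nat.exists_eq_succ_of_ne_zero hkpos
    simp only [Nat.succ_eq_add_one] at hk
    have hsplit : (PretAux.Sg φ u 0 (k' + 1)).length
        = (PretAux.Sg φ u 0 k').length + (φ (u k')).length := by
      rw [PretAux.Sg_succ]; simp
    have hφpos : 0 < (φ (u k')).length := List.length_pos_iff.mpr (hne' _)
    have hF := PretAux.factorAt_boundary φ u w hne' hpre k'
    have hb1 : applyInf φ u i = b := by
      have h1 := PretAux.factorAt_getElem? (applyInf φ u) i (1 + w.length) 0 (by omega)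
      rw [hi] at h1
      have h2 : (b :: w)[0]? = some b := by simp
      simpa using Option.some.inj (h1.symm.trans h2)
    have hidx : i = (PretAux.Sg φ u 0 k').length + ((φ (u k')).length - 1) := by omega
    have hb2 : applyInf φ u i = ρ (u k') := by
      have h1 := PretAux.factorAt_getElem? (applyInf φ u) (PretAux.Sg φ u 0 k').length
        ((φ (u k')).length + w.length) ((φ (u k')).length - 1) (by omega)
      rw [hF, ← hidx] at h1
      have h2 := PretAux.letter_last φ w (ρ (u k')) (u k') (hP (u k')).2.2 (hρ (u k'))
      exact Option.some.inj (h1.symm.trans h2)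
    have hua : u k' = a := hinj (by rw [← hb2, hb1, hb])
    have hlen : (φ a).length = (φ (u k')).length := by rw [hua]
    rw [List.length_append]
    constructor
    · omega
    · rw [show i + 1 + w.length - ((φ a).length + w.length)
          = (PretAux.Sg φ u 0 k').length from by omega, ← hua]
      exact hF
end
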